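/- Edge ordering configurations are geometric: let F be a forest in a finite connected graph G, and order and orient the edges not in F as e_1 < e_2 < ... < e_h. Orient each cycle C of G according to (the orientation of) the smallest edge among e_1, ..., e_h contained in C. Then there exists a vector w in the cycle space with ⟨w, C⟩ > 0 for every oriented cycle vector C of this configuration. -/

import Mathlib

open scoped Classical RealInnerProductSpace

-- numeric lemma
lemma geom_key (N : ℕ) (g : ℕ → ℝ) (hb : ∀ n, -1 ≤ g n)
    (hex : ∃ m, g m ≠ 0) (hlt : ∀ m, g m ≠ 0 → m < N)
    (hmin : ∀ m, g m ≠ 0 → (∀ k < m, g k = 0) → g m = 1) :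
    0 < ∑ n ∈ Finset.range N, (1/2:ℝ)^n * g n := by
  set m := Nat.find hex with hm
  have hgm : g m ≠ 0 := Nat.find_spec hex
  have hzero : ∀ k < m, g k = 0 := fun k hk => by
    by_contra hk0; exact absurd (Nat.find_le hk0) (not_le.mpr hk)
  have hmN : m < N := hlt m hgm
  have hg1 : g m = 1 := hmin m hgm hzero
  have hsplit : ∑ n ∈ Finset.range N, (1/2:ℝ)^n * g n
      = ∑ n ∈ Finset.Ico 0 m, (1/2:ℝ)^n * g n + ∑ n ∈ Finset.Ico m N, (1/2:ℝ)^n * g n := by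
    rw [Finset.range_eq_Ico, ← Finset.sum_Ico_consecutive _ (Nat.zero_le m) hmN.le]
  have h0 : ∑ n ∈ Finset.Ico 0 m, (1/2:ℝ)^n * g n = 0 := by
    apply Finset.sum_eq_zero
    intro n hn
    rw [hzero n (Finset.mem_Ico.mp hn).2, mul_zero]
  have hbot : ∑ n ∈ Finset.Ico m N, (1/2:ℝ)^n * g n
      = (1/2:ℝ)^m * g m + ∑ n ∈ Finset.Ico (m+1) N, (1/2:ℝ)^n * g n :=
    Finset.sum_eq_sum_Ico_succ_bot hmN _
  have htail : ∑ n ∈ Finset.Ico (m+1) N, (1/2:ℝ)^n * g n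
      ≥ -∑ n ∈ Finset.Ico (m+1) N, (1/2:ℝ)^n := by
    rw [← Finset.sum_neg_distrib]
    apply Finset.sum_le_sum
    intro n _
    have := hb n
    nlinarith [pow_pos (by norm_num : (0:ℝ) < 1/2) n]
  have hgeo : ∑ n ∈ Finset.Ico (m+1) N, (1/2:ℝ)^n
      = (1/2:ℝ)^m - 2 * (1/2:ℝ)^N := by
    rw [geom_sum_Ico (by norm_num : (1/2:ℝ) ≠ 1) hmN]
    field_simp
    simp only [Nat.succ_eq_add_one, pow_succ]; ring
  have hpow : (0:ℝ) < (1/2:ℝ)^N := pow_pos (by norm_num) N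
  rw [hsplit, h0, hbot, hg1]
  rw [hgeo] at htail
  nlinarith


variable {V E : Type} [Fintype V] [Fintype E] [DecidableEq V] [DecidableEq E]

/-- Reachability between vertices using (undirected) edges from the set `A`. -/
def ReachIn (ι : E → V × V) (A : Set E) (a b : V) : Prop :=
  Relation.ReflTransGen (fun x y => ∃ e ∈ A, ι e = (x, y) ∨ ι e = (y, x)) a b

/-- The graph with edge set `A` (on all of `V`) is connected. -/
def Conn (ι : E → V × V) (A : Set E) : Prop := ∀ a b : V, ReachIn ι A a b

/-- `C : E → ℤ` is the signed indicator vector of a (simple, directed) cycle: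
entries in `{-1,0,1}`, nonempty support, zero boundary, every vertex meets
0 or 2 support edges, and the support is connected. -/
def IsCycleVec (ι : E → V × V) (C : E → ℤ) : Prop :=
  (∀ e, C e = 0 ∨ C e = 1 ∨ C e = -1) ∧
  (∃ e, C e ≠ 0) ∧
  (∀ v : V, ∑ e : E, C e *
      ((if (ι e).2 = v then 1 else 0) - (if (ι e).1 = v then 1 else 0)) = 0) ∧
  (∀ v : V,
    (Finset.univ.filter fun e => C e ≠ 0 ∧ ((ι e).1 = v ∨ (ι e).2 = v)).card = 0 ∨
    (Finset.univ.filter fun e => C e ≠ 0 ∧ ((ι e).1 = v ∨ (ι e).2 = v)).card = 2) ∧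
  (∀ a b : V, (∃ e, C e ≠ 0 ∧ ((ι e).1 = a ∨ (ι e).2 = a)) →
    (∃ e, C e ≠ 0 ∧ ((ι e).1 = b ∨ (ι e).2 = b)) →
    ReachIn ι {e | C e ≠ 0} a b)

/-- The standard basis vector of an edge in the real edge space. -/
noncomputable def edgeVec (f : E) : EuclideanSpace ℝ E := EuclideanSpace.single f 1

/-- The real vector of an integral cycle vector. -/
def cycVecR (C : E → ℤ) : EuclideanSpace ℝ E := WithLp.toLp 2 (fun e => ((C e : ℝ)))

/-- The cycle space `H₁(G,ℝ)`: the span of the signed cycle vectors. -/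
noncomputable def cycleSpace (ι : E → V × V) : Submodule ℝ (EuclideanSpace ℝ E) :=
  Submodule.span ℝ {x | ∃ C : E → ℤ, IsCycleVec ι C ∧ x = cycVecR C}

/-- `π(f)`: the orthogonal projection of the edge basis vector onto the cycle space. -/
noncomputable def projCyc (ι : E → V × V) (f : E) : EuclideanSpace ℝ E :=
  (Submodule.orthogonalProjectionOnto (cycleSpace ι) (edgeVec f) : EuclideanSpace ℝ E)

-- inner product of a member of cycleSpace with projCyc
lemma inner_projCyc (ι : E → V × V) (f : E) (C : E → ℤ)
    (hv : cycVecR C ∈ cycleSpace ι) :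
    ∑ e : E, (C e : ℝ) * (projCyc ι f) e = (C f : ℝ) := by
  set v : EuclideanSpace ℝ E := cycVecR C with hvdef
  show ∑ e : E, v e * (projCyc ι f) e = v f
  have h1 : (inner ℝ (edgeVec f - projCyc ι f) v : ℝ) = 0 :=
    Submodule.starProjection_inner_eq_zero (K := cycleSpace ι) (edgeVec f) v hv
  have h2 : (inner ℝ v (edgeVec f) : ℝ) = (inner ℝ v (projCyc ι f) : ℝ) := by
    rw [inner_sub_left, sub_eq_zero] at h1
    calc (inner ℝ v (edgeVec f) : ℝ) = inner ℝ (edgeVec f) v := real_inner_comm _ _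
      _ = inner ℝ (projCyc ι f) v := h1
      _ = inner ℝ v (projCyc ι f) := real_inner_comm _ _
  have h3 : (inner ℝ v (edgeVec f) : ℝ) = v f := by
    unfold edgeVec
    rw [EuclideanSpace.inner_single_right]
    simp
  have h4 : (inner ℝ v (projCyc ι f) : ℝ) = ∑ e : E, v e * (projCyc ι f) e := by
    rw [PiLp.inner_apply]
    simp [mul_comm]
  rw [← h4, ← h2, h3]

/-- edge ordering configurations are geometric. If the edges outside the
forest `F` are ordered (and oriented) as `ord 0 < ord 1 < …`, and every cycle is oriented
according to its smallest edge outside `F` (i.e. has coefficient `+1` there), then some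
vector `w` of the cycle space has positive inner product with every such oriented cycle. -/
theorem edge_ordering_is_geometric (ι : E → V × V)
    (hconn : Conn ι Set.univ)
    (F : Finset E) (h : ℕ) (ord : Fin h → E) (hinj : Function.Injective ord)
    (hrange : Set.range ord = {e | e ∉ F})
    (hF : ∀ C : E → ℤ, IsCycleVec ι C → ∃ i, C (ord i) ≠ 0) :
    ∃ w : EuclideanSpace ℝ E, w ∈ cycleSpace ι ∧
      ∀ C : E → ℤ, IsCycleVec ι C →
        (∀ i : Fin h, C (ord i) ≠ 0 → (∀ j : Fin h, j < i → C (ord j) = 0) →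
          C (ord i) = 1) →
        0 < ∑ e : E, (C e : ℝ) * w e := by
  refine ⟨∑ i : Fin h, (1/2:ℝ)^(i:ℕ) • projCyc ι (ord i), ?_, ?_⟩
  · exact Submodule.sum_mem _ fun i _ =>
      Submodule.smul_mem _ _ (Submodule.orthogonalProjectionOnto (cycleSpace ι) (edgeVec (ord i))).2
  · intro C hC hsign
    have hmem : cycVecR C ∈ cycleSpace ι :=
      Submodule.subset_span ⟨C, hC, rfl⟩
    have happly : ∀ e : E, (∑ i : Fin h, (1/2:ℝ)^(i:ℕ) • projCyc ι (ord i)) e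
        = ∑ i : Fin h, (1/2:ℝ)^(i:ℕ) * (projCyc ι (ord i)) e := by
      intro e
      simp [WithLp.ofLp_sum, Finset.sum_apply]
    have hswap : ∑ e : E, (C e : ℝ) * (∑ i : Fin h, (1/2:ℝ)^(i:ℕ) • projCyc ι (ord i)) e
        = ∑ i : Fin h, (1/2:ℝ)^(i:ℕ) * (C (ord i) : ℝ) := by
      simp_rw [happly, Finset.mul_sum]
      rw [Finset.sum_comm]
      congr 1
      ext i
      have : ∑ e : E, (C e : ℝ) * ((1/2:ℝ)^(i:ℕ) * (projCyc ι (ord i)) e)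
          = (1/2:ℝ)^(i:ℕ) * ∑ e : E, (C e : ℝ) * (projCyc ι (ord i)) e := by
        rw [Finset.mul_sum]; congr 1; ext e; ring
      rw [this, inner_projCyc ι (ord i) C hmem]
    rw [hswap]
    -- now the numeric part
    set g : ℕ → ℝ := fun n => if hn : n < h then ((C (ord ⟨n, hn⟩) : ℝ)) else 0 with hg
    have hFin : ∑ i : Fin h, (1/2:ℝ)^(i:ℕ) * (C (ord i) : ℝ)
        = ∑ n ∈ Finset.range h, (1/2:ℝ)^n * g n := by
      rw [Finset.sum_range fun n => (1/2:ℝ)^n * g n]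
      apply Finset.sum_congr rfl
      intro i _
      simp [hg, i.isLt]
    rw [hFin]
    apply geom_key
    · intro n
      by_cases hn : n < h
      · simp only [hg, dif_pos hn]
        rcases hC.1 (ord ⟨n, hn⟩) with h' | h' | h' <;> rw [h'] <;> norm_num
      · simp [hg, hn]
    · obtain ⟨i, hi⟩ := hF C hC
      exact ⟨i, by simp [hg, i.isLt]; exact_mod_cast hi⟩
    · intro m hm
      by_contra hmh
      simp [hg, hmh] at hm
    · intro m hm hzero
      have hmh : m < h := by
        by_contra hmh
        exact hm (by simp [hg, dif_neg hmh])
      have hCm : C (ord ⟨m, hmh⟩) ≠ 0 := by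
        intro h0
        apply hm
        simp [hg, dif_pos hmh, h0]
      have := hsign ⟨m, hmh⟩ hCm (fun j hj => by
        have := hzero j.val hj
        simpa [hg, j.isLt] using this)
      simp [hg, dif_pos hmh, this]
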